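/- Let Σ ⊆ R be finite, g1,...,gr : Z^d → R finitely supported functions, and f : Z^d → Σ a (d−1)-periodic function such that g_j * f is d-periodic for every 1 ≤ j ≤ r. Then there exists a d-periodic function f̃ : Z^d → Σ with g_j * f̃ = g_j * f for all 1 ≤ j ≤ r. -/

import Mathlib

/-- Independent tuple of elements of an abelian group. -/
def IndepT {G : Type*} [AddCommGroup G] {k : ℕ} (g : Fin k → G) : Prop :=
  ∀ n : Fin k → ℤ, (∑ i, n i • g i) = 0 → ∀ i, n i = 0

/-- The stabilizer of a function on an abelian group, as a subgroup. -/
def stabG {G β : Type*} [AddCommGroup G] (f : G → β) : AddSubgroup G where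
  carrier := { v : G | ∀ x : G, f (x + v) = f x }
  zero_mem' := by intro x; simp
  add_mem' := by
    intro a b ha hb x
    rw [← add_assoc, hb, ha]
  neg_mem' := by
    intro a ha x
    simpa using (ha (x + -a)).symm

/-- Convolution of a finitely supported function `g` with a bounded function `f`. -/
noncomputable def convWith {d : ℕ} (g f : (Fin d → ℤ) → ℝ) : (Fin d → ℤ) → ℝ :=
  fun x => ∑ᶠ y : Fin d → ℤ, g y * f (x - y)

section AuxPhi

open Finset

variable {d : ℕ}

/-- Integer dot-product functional. -/
def phiZ (a x : Fin d → ℤ) : ℤ := ∑ k, a k * x k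

lemma phiZ_add (a x y : Fin d → ℤ) : phiZ a (x + y) = phiZ a x + phiZ a y := by
  simp [phiZ, mul_add, Finset.sum_add_distrib]

lemma phiZ_zsmul (a : Fin d → ℤ) (c : ℤ) (x : Fin d → ℤ) :
    phiZ a (c • x) = c * phiZ a x := by
  simp [phiZ, Finset.mul_sum]; congr 1; funext k; ring

lemma phiZ_neg (a x : Fin d → ℤ) : phiZ a (-x) = - phiZ a x := by
  simpa using phiZ_zsmul a (-1) x

lemma phiZ_sub (a x y : Fin d → ℤ) : phiZ a (x - y) = phiZ a x - phiZ a y := by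
  rw [sub_eq_add_neg, phiZ_add, phiZ_neg]; ring

/-- `phiZ` as a linear map. -/
def phiL (a : Fin d → ℤ) : (Fin d → ℤ) →ₗ[ℤ] ℤ where
  toFun := phiZ a
  map_add' := phiZ_add a
  map_smul' := fun c x => phiZ_zsmul a c x

@[simp] lemma phiL_apply (a x : Fin d → ℤ) : phiL a x = phiZ a x := rfl

/-- Rational dot-product functional as a linear map. -/
def phiQL (b : Fin d → ℚ) : (Fin d → ℚ) →ₗ[ℚ] ℚ where
  toFun := fun x => ∑ k, b k * x k
  map_add' := by intro x y; simp [mul_add, Finset.sum_add_distrib]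
  map_smul' := by
    intro c x; simp [Finset.mul_sum]; congr 1; funext k; ring

lemma phiQL_apply (b x : Fin d → ℚ) : phiQL b x = ∑ k, b k * x k := rfl

/-- Coordinatewise cast `ℤ^d → ℚ^d` as a `ℤ`-linear map. -/
def castLM (d : ℕ) : (Fin d → ℤ) →ₗ[ℤ] (Fin d → ℚ) :=
  LinearMap.pi fun k => (Int.castAddHom ℚ).toIntLinearMap.comp (LinearMap.proj k)

@[simp] lemma castLM_apply (x : Fin d → ℤ) (k : Fin d) : castLM d x k = (x k : ℚ) := rfl

lemma castLM_inj : Function.Injective (castLM d) := by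
  intro x y h
  funext k
  have : ((x k : ℚ)) = (y k : ℚ) := congrFun h k
  exact_mod_cast this

lemma phiQL_castLM (a x : Fin d → ℤ) :
    phiQL (castLM d a) (castLM d x) = (phiZ a x : ℚ) := by
  rw [phiQL_apply, phiZ]
  push_cast
  rfl

/-- Clearing denominators of a finite family of rationals. -/
lemma exists_den_clear {ι : Type*} [Fintype ι] (c : ι → ℚ) :
    ∃ D : ℤ, 0 < D ∧ ∀ i, ∃ z : ℤ, (z : ℚ) = D * c i := by
  refine ⟨∏ i, ((c i).den : ℤ), ?_, ?_⟩
  · exact Finset.prod_pos fun i _ => by exact_mod_cast (c i).den_pos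
  · intro i
    obtain ⟨E, hE⟩ := Finset.dvd_prod_of_mem (fun i => ((c i).den : ℤ)) (Finset.mem_univ i)
    refine ⟨E * (c i).num, ?_⟩
    have hden : ((c i).den : ℚ) ≠ 0 := by exact_mod_cast (c i).den_pos.ne'
    have h1 : ((c i).den : ℚ) * c i = (c i).num := by
      rw [mul_comm, Rat.mul_den_eq_num]
    rw [hE]
    push_cast
    rw [mul_comm ((c i).den : ℚ) (E : ℚ), mul_assoc, h1]

end AuxPhi

section ExistsPhi

open Finset

lemma exists_phi (d : ℕ) (hd : 0 < d) (u : Fin (d - 1) → Fin d → ℤ) (hu : IndepT u) :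
    ∃ a : Fin d → ℤ, (∃ i, a i ≠ 0) ∧ (∀ i, phiZ a (u i) = 0) ∧
      (∀ z, phiZ a z = 0 → ∃ D : ℤ, D ≠ 0 ∧ D • z ∈ Submodule.span ℤ (Set.range u)) ∧
      (∀ v, phiZ a v ≠ 0 → ∀ z, ∃ D : ℤ, D ≠ 0 ∧
        D • z ∈ Submodule.span ℤ (insert v (Set.range u))) := by
  classical
  set uQ : Fin (d - 1) → (Fin d → ℚ) := fun i => castLM d (u i) with huQ
  -- linear independence of uQ over ℚ
  have hindep : LinearIndependent ℚ uQ := by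
    rw [Fintype.linearIndependent_iff]
    intro q hq
    obtain ⟨D, hD, hz⟩ := exists_den_clear q
    choose nn hnn using hz
    have hsum : (∑ i, nn i • u i) = 0 := by
      apply castLM_inj
      rw [map_sum, map_zero]
      have : ∀ i, castLM d (nn i • u i) = (D : ℚ) • (q i • uQ i) := by
        intro i
        rw [map_smul]
        rw [smul_smul, ← hnn i, Int.cast_smul_eq_zsmul]
      rw [Finset.sum_congr rfl fun i _ => this i, ← Finset.smul_sum, hq, smul_zero]
    intro i
    have := hu nn hsum i
    have h0 : (0 : ℚ) = D * q i := by rw [← hnn i, this]; simp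
    have : q i = 0 := by
      rcases mul_eq_zero.mp h0.symm with h | h
      · exact absurd h (by exact_mod_cast hD.ne')
      · exact h
    exact this
  -- existence of a nonzero rational functional vanishing on the uQ
  have hex : ∃ aq : Fin d → ℚ, aq ≠ 0 ∧ ∀ i, (∑ k, aq k * uQ i k) = 0 := by
    set T : (Fin d → ℚ) →ₗ[ℚ] (Fin (d - 1) → ℚ) :=
      LinearMap.pi (fun i => phiQL (uQ i)) with hT
    have hnotinj : ¬ Function.Injective T := by
      intro hinj
      have := LinearMap.finrank_le_finrank_of_injective hinj
      rw [Module.finrank_pi, Module.finrank_pi, Fintype.card_fin, Fintype.card_fin] at this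
      omega
    rw [← LinearMap.ker_eq_bot] at hnotinj
    obtain ⟨aq, haq, hne⟩ := (Submodule.ne_bot_iff _).mp hnotinj
    refine ⟨aq, hne, fun i => ?_⟩
    have : T aq i = 0 := by rw [haq]; rfl
    rw [hT] at this
    simpa [phiQL_apply, mul_comm] using this
  obtain ⟨aq, haq0, haqu⟩ := hex
  obtain ⟨D0, hD0, hz0⟩ := exists_den_clear aq
  choose a ha using hz0
  have hcast : castLM d a = (D0 : ℚ) • aq := by
    funext k; rw [castLM_apply, ha k]; rfl
  have hane : ∃ i, a i ≠ 0 := by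
    by_contra h
    push_neg at h
    apply haq0
    funext k
    have : ((0:ℤ) : ℚ) = D0 * aq k := by rw [← h k, ha k]
    have hD0' : (D0:ℚ) ≠ 0 := by exact_mod_cast hD0.ne'
    field_simp at this
    have h2 : (D0:ℚ) * aq k = 0 := by rw [← ha k, h k]; simp
    exact (mul_eq_zero.mp h2).resolve_left hD0'
  have hau : ∀ i, phiZ a (u i) = 0 := by
    intro i
    have : (phiZ a (u i) : ℚ) = 0 := by
      rw [← phiQL_castLM, hcast]
      have : phiQL ((D0:ℚ) • aq) (castLM d (u i)) = (D0:ℚ) * ∑ k, aq k * uQ i k := by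
        rw [phiQL_apply, Finset.mul_sum]
        congr 1; funext k; rw [huQ]; simp; ring
      rw [this, haqu i, mul_zero]
    exact_mod_cast this
  -- the rational functional with integer coefficients
  set φQ : (Fin d → ℚ) →ₗ[ℚ] ℚ := phiQL (castLM d a) with hφQ
  have hφQu : ∀ i, φQ (uQ i) = 0 := by
    intro i; rw [hφQ, phiQL_castLM, hau i, Int.cast_zero]
  have hφQne : ∃ x, φQ x ≠ 0 := by
    obtain ⟨i0, hi0⟩ := hane
    refine ⟨Pi.single i0 1, ?_⟩
    rw [hφQ, phiQL_apply]
    rw [Finset.sum_eq_single i0]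
    · simp
      exact_mod_cast hi0
    · intro b _ hb; simp [Pi.single_apply, hb]
    · simp
  -- ker φQ = span uQ
  have hspanle : Submodule.span ℚ (Set.range uQ) ≤ LinearMap.ker φQ := by
    rw [Submodule.span_le]
    rintro _ ⟨i, rfl⟩
    exact LinearMap.mem_ker.mpr (hφQu i)
  have hkerne : LinearMap.ker φQ ≠ ⊤ := by
    obtain ⟨x, hx⟩ := hφQne
    intro h
    exact hx (LinearMap.mem_ker.mp (h ▸ Submodule.mem_top))
  have hfrk : Module.finrank ℚ (LinearMap.ker φQ) ≤ d - 1 := by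
    have h1 : Module.finrank ℚ (LinearMap.ker φQ) < Module.finrank ℚ (Fin d → ℚ) :=
      Submodule.finrank_lt hkerne
    rw [Module.finrank_pi, Fintype.card_fin] at h1
    omega
  have hfrk2 : Module.finrank ℚ (Submodule.span ℚ (Set.range uQ)) = d - 1 := by
    rw [finrank_span_eq_card hindep, Fintype.card_fin]
  have hkereq : Submodule.span ℚ (Set.range uQ) = LinearMap.ker φQ := by
    apply Submodule.eq_of_le_of_finrank_le hspanle
    rw [hfrk2]; exact hfrk
  -- conclusion 1
  have hker : ∀ z, phiZ a z = 0 → ∃ D : ℤ, D ≠ 0 ∧ D • z ∈ Submodule.span ℤ (Set.range u) := by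
    intro z hz
    have hmem : castLM d z ∈ LinearMap.ker φQ := by
      rw [LinearMap.mem_ker, hφQ, phiQL_castLM, hz, Int.cast_zero]
    rw [← hkereq] at hmem
    obtain ⟨c, hc⟩ := (Submodule.mem_span_range_iff_exists_fun ℚ).mp hmem
    obtain ⟨D, hD, hcz⟩ := exists_den_clear c
    choose nn hnn using hcz
    refine ⟨D, hD.ne', ?_⟩
    have heq : D • z = ∑ i, nn i • u i := by
      apply castLM_inj
      rw [map_smul, map_sum]
      have : ∀ i, castLM d (nn i • u i) = (D:ℚ) • (c i • uQ i) := by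
        intro i
        rw [map_smul, smul_smul, ← hnn i, Int.cast_smul_eq_zsmul]
      rw [Finset.sum_congr rfl fun i _ => this i, ← Finset.smul_sum, hc,
        Int.cast_smul_eq_zsmul]
    rw [heq]
    exact Submodule.sum_mem _ fun i _ =>
      Submodule.smul_mem _ _ (Submodule.subset_span ⟨i, rfl⟩)
  refine ⟨a, hane, hau, hker, ?_⟩
  -- conclusion 2
  intro v hv z
  set cv : ℚ := φQ (castLM d z) / φQ (castLM d v) with hcv
  have hφv : φQ (castLM d v) ≠ 0 := by
    rw [hφQ, phiQL_castLM]; exact_mod_cast hv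
  have hmem : castLM d z - cv • castLM d v ∈ LinearMap.ker φQ := by
    rw [LinearMap.mem_ker, map_sub, map_smul, smul_eq_mul, hcv,
      div_mul_cancel₀ _ hφv, sub_self]
  rw [← hkereq] at hmem
  obtain ⟨c, hc⟩ := (Submodule.mem_span_range_iff_exists_fun ℚ).mp hmem
  obtain ⟨D1, hD1, hc1⟩ := exists_den_clear c
  choose nn hnn using hc1
  obtain ⟨D2, hD2, hc2⟩ := exists_den_clear (fun _ : Fin 1 => cv)
  obtain ⟨nv, hnv⟩ := hc2 0
  refine ⟨D1 * D2, by positivity, ?_⟩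
  have hz' : castLM d z = (∑ i, c i • uQ i) + cv • castLM d v := by
    rw [hc, sub_add_cancel]
  have key : ∀ i, ((D2 * nn i : ℤ) : ℚ) = (D1 * D2 : ℚ) * c i := by
    intro i; push_cast; rw [hnn i]; ring
  have keyv : ((D1 * nv : ℤ) : ℚ) = (D1 * D2 : ℚ) * cv := by
    push_cast; rw [hnv]; ring
  have heq : (D1 * D2) • z = (∑ i, (D2 * nn i) • u i) + (D1 * nv) • v := by
    apply castLM_inj
    simp only [map_add, map_sum, map_smul, ← Int.cast_smul_eq_zsmul ℚ]
    rw [keyv, Finset.sum_congr rfl (fun i _ => by rw [key i]), hz']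
    have h2 : ∀ i, ((D1 * D2 : ℚ) * c i) • uQ i = (D1 * D2 : ℚ) • (c i • uQ i) :=
      fun i => (smul_smul _ _ _).symm
    rw [Finset.sum_congr rfl (fun i _ => h2 i), ← Finset.smul_sum]
    push_cast
    rw [smul_add, mul_smul, smul_smul, mul_smul (↑D1 * ↑D2 : ℚ) cv]
  rw [heq]
  refine Submodule.add_mem _ ?_ ?_
  · exact Submodule.sum_mem _ fun i _ => Submodule.smul_mem _ _
      (Submodule.subset_span (Set.mem_insert_of_mem _ ⟨i, rfl⟩))
  · exact Submodule.smul_mem _ _ (Submodule.subset_span (Set.mem_insert _ _))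

end ExistsPhi

section Slab

lemma slab_finite (d : ℕ) (u : Fin (d - 1) → Fin d → ℤ) (a : Fin d → ℤ)
    (hu0 : ∀ i, phiZ a (u i) = 0)
    (hker : ∀ z, phiZ a z = 0 → ∃ D : ℤ, D ≠ 0 ∧ D • z ∈ Submodule.span ℤ (Set.range u))
    (Wd : ℤ) :
    ∃ T : Finset (Fin d → ℤ), ∀ z : Fin d → ℤ, 0 ≤ phiZ a z → phiZ a z < Wd →
      ∃ t ∈ T, z - t ∈ Submodule.span ℤ (Set.range u) := by
  classical
  set Λ : Submodule ℤ (Fin d → ℤ) := Submodule.span ℤ (Set.range u) with hΛ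
  have hle : Λ ≤ LinearMap.ker (phiL a) := by
    rw [hΛ, Submodule.span_le]
    rintro _ ⟨i, rfl⟩
    exact LinearMap.mem_ker.mpr (hu0 i)
  set φbar : ((Fin d → ℤ) ⧸ Λ) →ₗ[ℤ] ℤ := Λ.liftQ (phiL a) hle with hφbar
  have hφbar_mk : ∀ z : Fin d → ℤ, φbar (Λ.mkQ z) = phiZ a z := fun z => rfl
  -- the kernel of φbar is finite
  have htor : Module.IsTorsion ℤ (LinearMap.ker φbar) := by
    intro x
    obtain ⟨z, hz⟩ := Λ.mkQ_surjective x.1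
    have hz0 : phiZ a z = 0 := by
      rw [← hφbar_mk z, hz]
      exact x.2
    obtain ⟨D, hD, hDz⟩ := hker z hz0
    refine ⟨⟨D, mem_nonZeroDivisors_of_ne_zero hD⟩, ?_⟩
    apply Subtype.ext
    show D • x.1 = 0
    rw [← hz, ← map_smul, Submodule.mkQ_apply, Submodule.Quotient.mk_eq_zero]
    exact hDz
  have hfinker : Finite (LinearMap.ker φbar) := by
    have : Module.Finite ℤ (LinearMap.ker φbar) := by
      infer_instance
    exact Module.finite_of_fg_torsion _ htor
  -- each level set in the quotient is finite
  have hlevel : ∀ k : ℤ, ({q : (Fin d → ℤ) ⧸ Λ | φbar q = k}).Finite := by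
    intro k
    rcases Set.eq_empty_or_nonempty {q : (Fin d → ℤ) ⧸ Λ | φbar q = k} with h | ⟨q0, hq0⟩
    · rw [h]; exact Set.finite_empty
    · have hsub : {q : (Fin d → ℤ) ⧸ Λ | φbar q = k} ⊆
          (fun w => q0 + w) '' (LinearMap.ker φbar : Set ((Fin d → ℤ) ⧸ Λ)) := by
        intro q hq
        refine ⟨q - q0, ?_, by simp⟩
        have : φbar (q - q0) = 0 := by
          rw [map_sub, hq, hq0, sub_self]
        exact LinearMap.mem_ker.mpr this
      have hfin : ((LinearMap.ker φbar : Set ((Fin d → ℤ) ⧸ Λ))).Finite := by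
        have : Finite ((LinearMap.ker φbar : Set ((Fin d → ℤ) ⧸ Λ))) := hfinker
        exact Set.toFinite _
      exact Set.Finite.subset (hfin.image _) hsub
  have hslabQ : ({q : (Fin d → ℤ) ⧸ Λ | φbar q ∈ Set.Ico 0 Wd}).Finite := by
    have : {q : (Fin d → ℤ) ⧸ Λ | φbar q ∈ Set.Ico 0 Wd} ⊆
        ⋃ k ∈ Finset.Ico (0:ℤ) Wd, {q : (Fin d → ℤ) ⧸ Λ | φbar q = k} := by
      intro q hq
      simp only [Set.mem_iUnion]
      exact ⟨φbar q, by simpa [Finset.mem_Ico] using hq, rfl⟩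
    exact Set.Finite.subset (Set.Finite.biUnion (Finset.Ico (0:ℤ) Wd).finite_toSet
      (fun k _ => hlevel k)) this
  refine ⟨hslabQ.toFinset.image Quotient.out, ?_⟩
  intro z h0 h1
  have hmem : Λ.mkQ z ∈ hslabQ.toFinset := by
    rw [Set.Finite.mem_toFinset]
    exact ⟨h0, h1⟩
  refine ⟨(Λ.mkQ z).out, Finset.mem_image_of_mem _ hmem, ?_⟩
  have hout : Λ.mkQ ((Λ.mkQ z).out) = Λ.mkQ z := by
    exact Quotient.out_eq _
  rw [← Submodule.Quotient.mk_eq_zero (p := Λ)]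
  show Λ.mkQ (z - (Λ.mkQ z).out) = 0
  rw [map_sub, hout, sub_self]

end Slab

section ConvStab

lemma mem_stabG {G β : Type*} [AddCommGroup G] (f : G → β) (v : G) :
    v ∈ stabG f ↔ ∀ x : G, f (x + v) = f x := Iff.rfl

lemma stabG_le_conv {d : ℕ} (g h : (Fin d → ℤ) → ℝ) :
    stabG h ≤ stabG (convWith g h) := by
  intro t ht
  rw [mem_stabG] at ht ⊢
  intro x
  unfold convWith
  apply finsum_congr
  intro y
  rw [show x + t - y = (x - y) + t by abel, ht]

lemma conv_congr' {d : ℕ} (g h1 h2 : (Fin d → ℤ) → ℝ) (x : Fin d → ℤ)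
    (hx : ∀ y, g y ≠ 0 → h1 (x - y) = h2 (x - y)) :
    convWith g h1 x = convWith g h2 x := by
  unfold convWith
  apply finsum_congr
  intro y
  by_cases hy : g y = 0
  · simp [hy]
  · rw [hx y hy]

end ConvStab

theorem stmt_12 (d r : ℕ) (S : Finset ℝ)
    (g : Fin r → (Fin d → ℤ) → ℝ)
    (hsupp : ∀ j, (Function.support (g j)).Finite)
    (f : (Fin d → ℤ) → ℝ) (hfS : ∀ x, f x ∈ S)
    (hper : ∃ u : Fin (d - 1) → (Fin d → ℤ), IndepT u ∧ ∀ i, u i ∈ stabG f)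
    (hconv : ∀ j, (stabG (convWith (g j) f)).FiniteIndex) :
    ∃ ftil : (Fin d → ℤ) → ℝ, (∀ x, ftil x ∈ S) ∧ (stabG ftil).FiniteIndex ∧
      ∀ j, convWith (g j) ftil = convWith (g j) f := by
  classical
  rcases Nat.eq_zero_or_pos d with hd0 | hd
  · subst hd0
    refine ⟨f, hfS, ?_, fun j => rfl⟩
    have hsub : Subsingleton (Fin 0 → ℤ) := ⟨fun a b => funext fun i => i.elim0⟩
    have hfin : Finite (Fin 0 → ℤ) := @Finite.of_subsingleton _ hsub
    exact ⟨@AddSubgroup.index_ne_zero_of_finite _ _ _ (Quotient.finite _)⟩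
  obtain ⟨u, hu, hustab⟩ := hper
  obtain ⟨a, ⟨i0, hi0⟩, hau, hker, hspan2⟩ := exists_phi d hd u hu
  set Λ : Submodule ℤ (Fin d → ℤ) := Submodule.span ℤ (Set.range u) with hΛ
  have hΛstab : ∀ c ∈ Λ, ∀ x, f (x + c) = f x := by
    intro c hc
    have hle : Λ ≤ AddSubgroup.toIntSubmodule (stabG f) := by
      rw [hΛ, Submodule.span_le]
      rintro _ ⟨i, rfl⟩
      exact hustab i
    exact hle hc
  have hΛker : ∀ c ∈ Λ, phiZ a c = 0 := by
    intro c hc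
    have hle : Λ ≤ LinearMap.ker (phiL a) := by
      rw [hΛ, Submodule.span_le]
      rintro _ ⟨i, rfl⟩
      exact LinearMap.mem_ker.mpr (hau i)
    exact hle hc
  -- a common period vector for all the convolutions, transverse to ker φ
  set N : ℕ := ∏ j, (stabG (convWith (g j) f)).index with hNdef
  have hNne : N ≠ 0 :=
    Finset.prod_ne_zero_iff.mpr fun j _ => (hconv j).index_ne_zero
  have hNmem : ∀ (x : Fin d → ℤ) j, (N:ℤ) • x ∈ stabG (convWith (g j) f) := by
    intro x j
    obtain ⟨E, hE⟩ := Finset.dvd_prod_of_mem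
      (fun j => (stabG (convWith (g j) f)).index) (Finset.mem_univ j)
    rw [natCast_zsmul, hNdef, hE, mul_comm, mul_smul]
    exact AddSubgroup.nsmul_mem _ (AddSubgroup.nsmul_index_mem _ x) E
  set w0 : Fin d → ℤ := (N:ℤ) • Pi.single i0 1 with hw0def
  have hφsingle : phiZ a (Pi.single i0 1) = a i0 := by
    rw [phiZ, Finset.sum_eq_single i0]
    · simp
    · intro b _ hb; simp [Pi.single_apply, hb]
    · simp
  have hφw0 : phiZ a w0 = (N:ℤ) * a i0 := by
    rw [hw0def, phiZ_zsmul, hφsingle]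
  have hφw0ne : phiZ a w0 ≠ 0 := by
    rw [hφw0]
    exact mul_ne_zero (by exact_mod_cast hNne) hi0
  set w : Fin d → ℤ := if 0 < phiZ a w0 then w0 else -w0 with hwdef
  have hwconv : ∀ j, w ∈ stabG (convWith (g j) f) := by
    intro j
    rw [hwdef]
    split_ifs
    · exact hNmem _ j
    · exact AddSubgroup.neg_mem _ (hNmem _ j)
  set m : ℤ := phiZ a w with hmdef
  have hm : 0 < m := by
    rw [hmdef, hwdef]
    split_ifs with h
    · exact h
    · rw [phiZ_neg]
      omega
  -- width bound on the supports
  have hUfin : (⋃ j, Function.support (g j)).Finite := Set.finite_iUnion hsupp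
  set W0 : ℤ := ((hUfin.toFinset.sup fun y => (phiZ a y).natAbs : ℕ) : ℤ) with hW0def
  have hW0 : ∀ j y, g j y ≠ 0 → |phiZ a y| ≤ W0 := by
    intro j y hy
    have hymem : y ∈ hUfin.toFinset := by
      rw [Set.Finite.mem_toFinset]
      exact Set.mem_iUnion.mpr ⟨j, hy⟩
    have hle := Finset.le_sup (f := fun y => (phiZ a y).natAbs) hymem
    rw [hW0def, Int.abs_eq_natAbs]
    exact_mod_cast hle
  have hW0nn : 0 ≤ W0 := by rw [hW0def]; positivity
  set Wd : ℤ := 2 * W0 + 2 with hWddef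
  -- transversal of the slab, and pigeonhole
  obtain ⟨T, hT⟩ := slab_finite d u a hau hker Wd
  set θ : ℕ → (T → {x // x ∈ S}) :=
    fun nn t => (⟨f ((nn:ℤ) • w + t), hfS _⟩ : {x // x ∈ S}) with hθdef
  obtain ⟨n1, n2, hne12, hθeq12⟩ := Finite.exists_ne_map_eq_of_infinite θ
  obtain ⟨n, n', hlt, hθeq⟩ : ∃ n n' : ℕ, n < n' ∧ θ n = θ n' := by
    rcases lt_or_gt_of_ne hne12 with h | h
    exacts [⟨n1, n2, h, hθeq12⟩, ⟨n2, n1, h, hθeq12.symm⟩]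
  have hfmatch0 : ∀ t, t ∈ T → f ((n':ℤ) • w + t) = f ((n:ℤ) • w + t) := by
    intro t ht
    have := congrFun hθeq ⟨t, ht⟩
    exact (congrArg Subtype.val this).symm
  set K : ℤ := (n':ℤ) - (n:ℤ) with hKdef
  have hK : 0 < K := by rw [hKdef]; omega
  set v : Fin d → ℤ := K • w with hvdef
  set km : ℤ := K * m with hkmdef
  have hkm : 0 < km := mul_pos hK hm
  have hφv : phiZ a v = km := by rw [hvdef, phiZ_zsmul, hkmdef, hmdef]
  set B : ℤ := (n:ℤ) * m with hBdef
  -- the matching property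
  have hmatch : ∀ z, B ≤ phiZ a z → phiZ a z < B + Wd → f (z + v) = f z := by
    intro z h0 h1
    set z0 : Fin d → ℤ := z - (n:ℤ) • w with hz0
    have hφz0 : phiZ a z0 = phiZ a z - (n:ℤ) * m := by
      rw [hz0, phiZ_sub, phiZ_zsmul, hmdef]
    obtain ⟨t, htT, hlamΛ⟩ := hT z0 (by rw [hφz0, ← hBdef]; omega) (by rw [hφz0, ← hBdef]; omega)
    set lam : Fin d → ℤ := z0 - t with hlam
    have h1' : z + v = ((n':ℤ) • w + t) + lam := by
      rw [hlam, hz0, hvdef, hKdef, sub_smul]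
      abel
    have h2' : z = ((n:ℤ) • w + t) + lam := by rw [hlam, hz0]; abel
    rw [h1', hΛstab lam hlamΛ, hfmatch0 t htT, ← hΛstab lam hlamΛ, ← h2']
  -- the periodization of f
  set q : (Fin d → ℤ) → ℤ := fun x => (phiZ a x - B) / km with hqdef
  set ftil : (Fin d → ℤ) → ℝ := fun x => f (x - q x • v) with hftil
  have hftilS : ∀ x, ftil x ∈ S := fun x => hfS _
  -- ftil agrees with f on a fat slab
  have hstar : ∀ x, B ≤ phiZ a x → phiZ a x < B + km + Wd → ftil x = f x := by
    intro x h0 h1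
    have hqnn : 0 ≤ q x := Int.ediv_nonneg (by omega) hkm.le
    have hdiv := Int.mul_ediv_add_emod (phiZ a x - B) km
    have hr0 : 0 ≤ (phiZ a x - B) % km := Int.emod_nonneg _ hkm.ne'
    have hqx : q x = (phiZ a x - B) / km := rfl
    have hqle : q x * km ≤ phiZ a x - B := by
      rw [hqx, mul_comm]
      linarith [hdiv, hr0]
    have key : ∀ i : ℕ, (i:ℤ) ≤ q x → f (x - (i:ℤ) • v) = f x := by
      intro i
      induction i with
      | zero => intro _; simp
      | succ i ih =>
        intro hi
        have hi' : (i:ℤ) ≤ q x := by push_cast at hi ⊢; omega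
        have hii : ((i:ℤ) + 1) * km ≤ q x * km :=
          mul_le_mul_of_nonneg_right (by push_cast at hi ⊢; omega) hkm.le
        have hφ : phiZ a (x - ((i:ℤ) + 1) • v) = phiZ a x - ((i:ℤ) + 1) * km := by
          rw [phiZ_sub, phiZ_zsmul, hφv]
        have hb1 : B ≤ phiZ a (x - ((i:ℤ) + 1) • v) := by rw [hφ]; linarith
        have hb2 : phiZ a (x - ((i:ℤ) + 1) • v) < B + Wd := by
          rw [hφ]
          have hkk : km ≤ ((i:ℤ) + 1) * km := le_mul_of_one_le_left hkm.le (by omega)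
          linarith
        have hstep := hmatch _ hb1 hb2
        have hre : (x - ((i:ℤ) + 1) • v) + v = x - (i:ℤ) • v := by
          rw [add_smul, one_smul]; abel
        rw [show ((i + 1 : ℕ):ℤ) = (i:ℤ) + 1 by push_cast; ring]
        calc f (x - ((i:ℤ) + 1) • v) = f ((x - ((i:ℤ) + 1) • v) + v) := hstep.symm
        _ = f (x - (i:ℤ) • v) := by rw [hre]
        _ = f x := ih hi'
    have := key (q x).toNat (by rw [Int.toNat_of_nonneg hqnn])
    rw [Int.toNat_of_nonneg hqnn] at this
    rw [hftil]
    exact this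
  -- ftil is Λ-periodic and v-periodic
  have hstabΛ : ∀ c ∈ Λ, ∀ x, ftil (x + c) = ftil x := by
    intro c hc x
    have hφ : phiZ a (x + c) = phiZ a x := by rw [phiZ_add, hΛker c hc, add_zero]
    show f ((x + c) - q (x + c) • v) = f (x - q x • v)
    have hq : q (x + c) = q x := by
      show (phiZ a (x + c) - B) / km = (phiZ a x - B) / km
      rw [hφ]
    rw [hq, show (x + c) - q x • v = (x - q x • v) + c by abel, hΛstab c hc]
  have hstabv : ∀ x, ftil (x + v) = ftil x := by
    intro x
    have hφ : phiZ a (x + v) = phiZ a x + km := by rw [phiZ_add, hφv]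
    show f ((x + v) - q (x + v) • v) = f (x - q x • v)
    have hq : q (x + v) = q x + 1 := by
      show (phiZ a (x + v) - B) / km = (phiZ a x - B) / km + 1
      rw [hφ, show phiZ a x + km - B = (phiZ a x - B) + 1 * km by ring,
        Int.add_mul_ediv_right _ _ hkm.ne']
    rw [hq, add_smul, one_smul, show (x + v) - (q x • v + v) = x - q x • v by abel]
  -- ftil has finite-index stabilizer
  set P : Submodule ℤ (Fin d → ℤ) := Submodule.span ℤ (insert v (Set.range u)) with hP
  have hPle : P ≤ AddSubgroup.toIntSubmodule (stabG ftil) := by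
    rw [hP, Submodule.span_le]
    intro c hc
    have hc' : ∀ x, ftil (x + c) = ftil x := by
      rcases Set.mem_insert_iff.mp hc with h | ⟨i, h⟩
      · intro x; rw [h]; exact hstabv x
      · intro x
        refine hstabΛ c ?_ x
        exact h ▸ (Submodule.subset_span ⟨i, rfl⟩ : u i ∈ Λ)
    exact hc'
  have htor : Module.IsTorsion ℤ ((Fin d → ℤ) ⧸ P) := by
    intro x
    obtain ⟨z, rfl⟩ := P.mkQ_surjective x
    obtain ⟨D, hD, hDz⟩ := hspan2 v (by rw [hφv]; exact hkm.ne') z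
    refine ⟨⟨D, mem_nonZeroDivisors_of_ne_zero hD⟩, ?_⟩
    show D • P.mkQ z = 0
    rw [← map_smul, Submodule.mkQ_apply, Submodule.Quotient.mk_eq_zero]
    exact hDz
  have hfinQ : Finite ((Fin d → ℤ) ⧸ P) := Module.finite_of_fg_torsion _ htor
  have hFI : (stabG ftil).FiniteIndex := by
    have hkerle : P ≤ LinearMap.ker
        ((QuotientAddGroup.mk' (stabG ftil)).toIntLinearMap) := by
      intro c hc
      rw [LinearMap.mem_ker]
      show QuotientAddGroup.mk' (stabG ftil) c = 0
      rw [← AddMonoidHom.mem_ker, QuotientAddGroup.ker_mk']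
      exact hPle hc
    have hsurj : Function.Surjective
        (P.liftQ ((QuotientAddGroup.mk' (stabG ftil)).toIntLinearMap) hkerle) := by
      intro y
      obtain ⟨z, hz⟩ := QuotientAddGroup.mk'_surjective (stabG ftil) y
      exact ⟨P.mkQ z, hz⟩
    have hfin2 : Finite ((Fin d → ℤ) ⧸ stabG ftil) := Finite.of_surjective _ hsurj
    exact ⟨AddSubgroup.index_ne_zero_of_finite⟩
  -- the convolutions agree
  refine ⟨ftil, hftilS, hFI, fun j => ?_⟩
  funext x
  set q1 : ℤ := (phiZ a x - (B + W0 + 1)) / km with hq1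
  set t : Fin d → ℤ := q1 • v with htdef
  have hx1 : ∀ C : (Fin d → ℤ) → ℝ, t ∈ stabG C → C x = C (x - t) := by
    intro C hC
    have := hC (x - t)
    rwa [show (x - t) + t = x by abel] at this
  have ht1 : t ∈ stabG (convWith (g j) ftil) := by
    rw [htdef]
    exact AddSubgroup.zsmul_mem _ (stabG_le_conv _ _ ((mem_stabG ftil v).mpr hstabv)) q1
  have ht2 : t ∈ stabG (convWith (g j) f) := by
    rw [htdef, hvdef, smul_smul]
    exact AddSubgroup.zsmul_mem _ (hwconv j) _
  rw [hx1 _ ht1, hx1 _ ht2]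
  apply conv_congr'
  intro y hy
  apply hstar
  all_goals {
    have hφx1 : phiZ a (x - t) = phiZ a x - q1 * km := by
      rw [phiZ_sub, htdef, phiZ_zsmul, hφv]
    have hdiv := Int.mul_ediv_add_emod (phiZ a x - (B + W0 + 1)) km
    rw [← hq1, mul_comm] at hdiv
    have hr0 : 0 ≤ (phiZ a x - (B + W0 + 1)) % km := Int.emod_nonneg _ hkm.ne'
    have hr1 : (phiZ a x - (B + W0 + 1)) % km < km := Int.emod_lt_of_pos _ hkm
    have hyb := abs_le.mp (hW0 j y hy)
    rw [phiZ_sub, hφx1]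
    linarith [hdiv, hr0, hr1, hyb.1, hyb.2, hWddef]
  }
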